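/- Let k be a field and L ⊆ ℤ⁴ the subgroup generated by (1,1,0,−1) and (0,1,1,−1). Then the Lawrence ideal J_L ⊆ S = k[x₁,x₂,x₃,x₄,y₁,y₂,y₃,y₄] equals the ideal generated by x₁x₂y₄ − x₄y₁y₂, x₂x₃y₄ − x₄y₂y₃, and x₁y₃ − x₃y₁. -/
import Mathlib


/-!
STATEMENT 7: for `L = ⟨(1,1,0,−1), (0,1,1,−1)⟩ ⊆ ℤ⁴` (principal divisors of `Bl_p ℙ²`
with rays `(1,0), (1,1), (0,1), (−1,−1)`), the Lawrence ideal `J_L` equals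
`⟨x₁x₂y₄ − x₄y₁y₂, x₂x₃y₄ − x₄y₂y₃, x₁y₃ − x₃y₁⟩`.
-/

noncomputable section

open MvPolynomial

/-- The polynomial ring `S = k[x₁,…,x₄,y₁,…,y₄]`; `Sum.inl i ↦ xᵢ₊₁`, `Sum.inr i ↦ yᵢ₊₁`. -/
abbrev PolyS (k : Type*) [Field k] := MvPolynomial (Fin 4 ⊕ Fin 4) k

/-- `xᵢ₊₁` (0-indexed). -/
def xv (k : Type*) [Field k] (i : Fin 4) : PolyS k := X (Sum.inl i)

/-- `yᵢ₊₁` (0-indexed). -/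
def yv (k : Type*) [Field k] (i : Fin 4) : PolyS k := X (Sum.inr i)

/-- The monomial `x^a y^b ∈ S`. -/
def xymon (k : Type*) [Field k] (a b : Fin 4 → ℕ) : PolyS k :=
  (∏ i, xv k i ^ a i) * ∏ i, yv k i ^ b i

/-- The Lawrence ideal `J_L = ⟨x^a y^b - x^b y^a : a - b ∈ L⟩ ⊆ S`. -/
def lawrenceIdeal (k : Type*) [Field k] (L : AddSubgroup (Fin 4 → ℤ)) :
    Ideal (PolyS k) :=
  Ideal.span { f | ∃ a b : Fin 4 → ℕ,
    ((fun i => (a i : ℤ)) - (fun i => (b i : ℤ))) ∈ L ∧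
    f = xymon k a b - xymon k b a }

/-- Auxiliary monomial with explicit exponents. -/
def Bm (k : Type*) [Field k] (p0 p1 p2 p3 q0 q1 q2 q3 : ℕ) : PolyS k :=
  xv k 0 ^ p0 * xv k 1 ^ p1 * xv k 2 ^ p2 * xv k 3 ^ p3 *
  (yv k 0 ^ q0 * yv k 1 ^ q1 * yv k 2 ^ q2 * yv k 3 ^ q3)

lemma xymon_eq_Bm (k : Type*) [Field k] (a b : Fin 4 → ℕ) :
    xymon k a b = Bm k (a 0) (a 1) (a 2) (a 3) (b 0) (b 1) (b 2) (b 3) := by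
  unfold xymon Bm
  rw [Fin.prod_univ_four, Fin.prod_univ_four]

/-- The target ideal. -/
def Ig (k : Type*) [Field k] : Ideal (PolyS k) :=
  Ideal.span
    { xv k 0 * xv k 1 * yv k 3 - xv k 3 * yv k 0 * yv k 1,
      xv k 1 * xv k 2 * yv k 3 - xv k 3 * yv k 1 * yv k 2,
      xv k 0 * yv k 2 - xv k 2 * yv k 0 }

lemma g1_mem (k : Type*) [Field k] :
    xv k 0 * xv k 1 * yv k 3 - xv k 3 * yv k 0 * yv k 1 ∈ Ig k :=
  Ideal.subset_span (Set.mem_insert _ _)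

lemma g2_mem (k : Type*) [Field k] :
    xv k 1 * xv k 2 * yv k 3 - xv k 3 * yv k 1 * yv k 2 ∈ Ig k :=
  Ideal.subset_span (Set.mem_insert_of_mem _ (Set.mem_insert _ _))

lemma g3_mem (k : Type*) [Field k] :
    xv k 0 * yv k 2 - xv k 2 * yv k 0 ∈ Ig k :=
  Ideal.subset_span (Set.mem_insert_of_mem _ (Set.mem_insert_of_mem _ rfl))

set_option maxHeartbeats 1000000 in
lemma move1 (k : Type*) [Field k] (p0 p1 p2 p3 q0 q1 q2 q3 : ℕ) :
    Bm k (p0+1) (p1+1) p2 p3 q0 q1 q2 (q3+1)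
      = Bm k p0 p1 p2 p3 q0 q1 q2 q3
          * (xv k 0 * xv k 1 * yv k 3 - xv k 3 * yv k 0 * yv k 1)
        + Bm k p0 p1 p2 (p3+1) (q0+1) (q1+1) q2 q3 := by
  unfold Bm; ring

set_option maxHeartbeats 1000000 in
lemma move2 (k : Type*) [Field k] (p0 p1 p2 p3 q0 q1 q2 q3 : ℕ) :
    Bm k p0 (p1+1) (p2+1) p3 q0 q1 q2 (q3+1)
      = Bm k p0 p1 p2 p3 q0 q1 q2 q3
          * (xv k 1 * xv k 2 * yv k 3 - xv k 3 * yv k 1 * yv k 2)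
        + Bm k p0 p1 p2 (p3+1) q0 (q1+1) (q2+1) q3 := by
  unfold Bm; ring

set_option maxHeartbeats 1000000 in
lemma move3 (k : Type*) [Field k] (p0 p1 p2 p3 q0 q1 q2 q3 : ℕ) :
    Bm k (p0+1) p1 p2 p3 q0 q1 (q2+1) q3
      = Bm k p0 p1 p2 p3 q0 q1 q2 q3 * (xv k 0 * yv k 2 - xv k 2 * yv k 0)
        + Bm k p0 p1 (p2+1) p3 (q0+1) q1 q2 q3 := by
  unfold Bm; ring

def KeyProp (k : Type*) [Field k] (m n : ℤ) : Prop :=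
  ∀ p0 p1 p2 p3 q0 q1 q2 q3 r0 r1 r2 r3 s0 s1 s2 s3 : ℕ,
    (p0:ℤ) - r0 = m → (p1:ℤ) - r1 = m + n → (p2:ℤ) - r2 = n → (p3:ℤ) - r3 = -m - n →
    (s0:ℤ) - q0 = m → (s1:ℤ) - q1 = m + n → (s2:ℤ) - q2 = n → (s3:ℤ) - q3 = -m - n →
    Bm k p0 p1 p2 p3 q0 q1 q2 q3 - Bm k r0 r1 r2 r3 s0 s1 s2 s3 ∈ Ig k

lemma case0 (k : Type*) [Field k] : KeyProp k 0 0 := by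
  intro p0 p1 p2 p3 q0 q1 q2 q3 r0 r1 r2 r3 s0 s1 s2 s3 h1 h2 h3 h4 h5 h6 h7 h8
  obtain rfl : p0 = r0 := by omega
  obtain rfl : p1 = r1 := by omega
  obtain rfl : p2 = r2 := by omega
  obtain rfl : p3 = r3 := by omega
  obtain rfl : s0 = q0 := by omega
  obtain rfl : s1 = q1 := by omega
  obtain rfl : s2 = q2 := by omega
  obtain rfl : s3 = q3 := by omega
  rw [sub_self]; exact zero_mem _

lemma caseA (k : Type*) [Field k] (m n : ℤ) (hm : 1 ≤ m) (hn : 1 ≤ m + n)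
    (IH : KeyProp k (m-1) n) : KeyProp k m n := by
  intro p0 p1 p2 p3 q0 q1 q2 q3 r0 r1 r2 r3 s0 s1 s2 s3 h1 h2 h3 h4 h5 h6 h7 h8
  obtain ⟨p0', rfl⟩ : ∃ t, p0 = t + 1 := ⟨p0 - 1, by omega⟩
  obtain ⟨p1', rfl⟩ : ∃ t, p1 = t + 1 := ⟨p1 - 1, by omega⟩
  obtain ⟨q3', rfl⟩ : ∃ t, q3 = t + 1 := ⟨q3 - 1, by omega⟩
  rw [move1, add_sub_assoc]
  refine add_mem (Ideal.mul_mem_left _ _ (g1_mem k)) ?_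
  exact IH p0' p1' p2 (p3+1) (q0+1) (q1+1) q2 q3' r0 r1 r2 r3 s0 s1 s2 s3
    (by omega) (by omega) (by omega) (by omega) (by omega) (by omega) (by omega) (by omega)

lemma caseA' (k : Type*) [Field k] (m n : ℤ) (hm : m ≤ -1) (hn : m + n ≤ -1)
    (IH : KeyProp k (m+1) n) : KeyProp k m n := by
  intro p0 p1 p2 p3 q0 q1 q2 q3 r0 r1 r2 r3 s0 s1 s2 s3 h1 h2 h3 h4 h5 h6 h7 h8
  obtain ⟨r0', rfl⟩ : ∃ t, r0 = t + 1 := ⟨r0 - 1, by omega⟩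
  obtain ⟨r1', rfl⟩ : ∃ t, r1 = t + 1 := ⟨r1 - 1, by omega⟩
  obtain ⟨s3', rfl⟩ : ∃ t, s3 = t + 1 := ⟨s3 - 1, by omega⟩
  rw [move1, sub_add_eq_sub_sub, sub_right_comm]
  refine sub_mem ?_ (Ideal.mul_mem_left _ _ (g1_mem k))
  exact IH p0 p1 p2 p3 q0 q1 q2 q3 r0' r1' r2 (r3+1) (s0+1) (s1+1) s2 s3'
    (by omega) (by omega) (by omega) (by omega) (by omega) (by omega) (by omega) (by omega)

lemma caseB (k : Type*) [Field k] (m n : ℤ) (hm : 1 ≤ n) (hn : 1 ≤ m + n)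
    (IH : KeyProp k m (n-1)) : KeyProp k m n := by
  intro p0 p1 p2 p3 q0 q1 q2 q3 r0 r1 r2 r3 s0 s1 s2 s3 h1 h2 h3 h4 h5 h6 h7 h8
  obtain ⟨p1', rfl⟩ : ∃ t, p1 = t + 1 := ⟨p1 - 1, by omega⟩
  obtain ⟨p2', rfl⟩ : ∃ t, p2 = t + 1 := ⟨p2 - 1, by omega⟩
  obtain ⟨q3', rfl⟩ : ∃ t, q3 = t + 1 := ⟨q3 - 1, by omega⟩
  rw [move2, add_sub_assoc]
  refine add_mem (Ideal.mul_mem_left _ _ (g2_mem k)) ?_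
  exact IH p0 p1' p2' (p3+1) q0 (q1+1) (q2+1) q3' r0 r1 r2 r3 s0 s1 s2 s3
    (by omega) (by omega) (by omega) (by omega) (by omega) (by omega) (by omega) (by omega)

lemma caseB' (k : Type*) [Field k] (m n : ℤ) (hm : n ≤ -1) (hn : m + n ≤ -1)
    (IH : KeyProp k m (n+1)) : KeyProp k m n := by
  intro p0 p1 p2 p3 q0 q1 q2 q3 r0 r1 r2 r3 s0 s1 s2 s3 h1 h2 h3 h4 h5 h6 h7 h8
  obtain ⟨r1', rfl⟩ : ∃ t, r1 = t + 1 := ⟨r1 - 1, by omega⟩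
  obtain ⟨r2', rfl⟩ : ∃ t, r2 = t + 1 := ⟨r2 - 1, by omega⟩
  obtain ⟨s3', rfl⟩ : ∃ t, s3 = t + 1 := ⟨s3 - 1, by omega⟩
  rw [move2, sub_add_eq_sub_sub, sub_right_comm]
  refine sub_mem ?_ (Ideal.mul_mem_left _ _ (g2_mem k))
  exact IH p0 p1 p2 p3 q0 q1 q2 q3 r0 r1' r2' (r3+1) s0 (s1+1) (s2+1) s3'
    (by omega) (by omega) (by omega) (by omega) (by omega) (by omega) (by omega) (by omega)

lemma caseC (k : Type*) [Field k] (m n : ℤ) (hm : 1 ≤ m) (hn : n ≤ -1)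
    (IH : KeyProp k (m-1) (n+1)) : KeyProp k m n := by
  intro p0 p1 p2 p3 q0 q1 q2 q3 r0 r1 r2 r3 s0 s1 s2 s3 h1 h2 h3 h4 h5 h6 h7 h8
  obtain ⟨p0', rfl⟩ : ∃ t, p0 = t + 1 := ⟨p0 - 1, by omega⟩
  obtain ⟨q2', rfl⟩ : ∃ t, q2 = t + 1 := ⟨q2 - 1, by omega⟩
  rw [move3, add_sub_assoc]
  refine add_mem (Ideal.mul_mem_left _ _ (g3_mem k)) ?_
  exact IH p0' p1 (p2+1) p3 (q0+1) q1 q2' q3 r0 r1 r2 r3 s0 s1 s2 s3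
    (by omega) (by omega) (by omega) (by omega) (by omega) (by omega) (by omega) (by omega)

lemma caseC' (k : Type*) [Field k] (m n : ℤ) (hm : m ≤ -1) (hn : 1 ≤ n)
    (IH : KeyProp k (m+1) (n-1)) : KeyProp k m n := by
  intro p0 p1 p2 p3 q0 q1 q2 q3 r0 r1 r2 r3 s0 s1 s2 s3 h1 h2 h3 h4 h5 h6 h7 h8
  obtain ⟨r0', rfl⟩ : ∃ t, r0 = t + 1 := ⟨r0 - 1, by omega⟩
  obtain ⟨s2', rfl⟩ : ∃ t, s2 = t + 1 := ⟨s2 - 1, by omega⟩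
  rw [move3, sub_add_eq_sub_sub, sub_right_comm]
  refine sub_mem ?_ (Ideal.mul_mem_left _ _ (g3_mem k))
  exact IH p0 p1 p2 p3 q0 q1 q2 q3 r0' r1 (r2+1) r3 (s0+1) s1 s2' s3
    (by omega) (by omega) (by omega) (by omega) (by omega) (by omega) (by omega) (by omega)

lemma key (k : Type*) [Field k] :
    ∀ N : ℕ, ∀ m n : ℤ, m.natAbs + n.natAbs ≤ N → KeyProp k m n := by
  intro N
  induction N with
  | zero =>
    intro m n hN
    obtain ⟨rfl, rfl⟩ : m = 0 ∧ n = 0 := by omega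
    exact case0 k
  | succ N ih =>
    intro m n hN
    have hcase : (m = 0 ∧ n = 0) ∨ (1 ≤ m ∧ 1 ≤ m + n) ∨ (m ≤ -1 ∧ m + n ≤ -1) ∨
        (1 ≤ n ∧ 1 ≤ m + n) ∨ (n ≤ -1 ∧ m + n ≤ -1) ∨ (1 ≤ m ∧ n ≤ -1) ∨
        (m ≤ -1 ∧ 1 ≤ n) := by omega
    rcases hcase with ⟨rfl, rfl⟩ | ⟨hm, hn⟩ | ⟨hm, hn⟩ | ⟨hm, hn⟩ | ⟨hm, hn⟩ | ⟨hm, hn⟩ | ⟨hm, hn⟩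
    · exact case0 k
    · exact caseA k m n hm hn (ih (m-1) n (by omega))
    · exact caseA' k m n hm hn (ih (m+1) n (by omega))
    · exact caseB k m n hm hn (ih m (n-1) (by omega))
    · exact caseB' k m n hm hn (ih m (n+1) (by omega))
    · exact caseC k m n hm hn (ih (m-1) (n+1) (by omega))
    · exact caseC' k m n hm hn (ih (m+1) (n-1) (by omega))

set_option maxHeartbeats 1000000 in
theorem lawrenceIdeal_blowup_P2' (k : Type*) [Field k] :
    lawrenceIdeal k (AddSubgroup.closure {![1, 1, 0, -1], ![0, 1, 1, -1]})
      = Ideal.span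
          { xv k 0 * xv k 1 * yv k 3 - xv k 3 * yv k 0 * yv k 1,
            xv k 1 * xv k 2 * yv k 3 - xv k 3 * yv k 1 * yv k 2,
            xv k 0 * yv k 2 - xv k 2 * yv k 0 } := by
  apply le_antisymm
  · rw [lawrenceIdeal, Ideal.span_le]
    rintro f ⟨a, b, hab, rfl⟩
    rw [AddSubgroup.mem_closure_pair] at hab
    obtain ⟨m, n, hmn⟩ := hab
    have h0 := congrFun hmn 0
    have h1 := congrFun hmn 1
    have h2 := congrFun hmn 2
    have h3 := congrFun hmn 3
    simp [Pi.sub_apply] at h0 h1 h2 h3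
    show _ ∈ Ig k
    rw [xymon_eq_Bm, xymon_eq_Bm]
    exact key k (m.natAbs + n.natAbs) m n le_rfl (a 0) (a 1) (a 2) (a 3) (b 0) (b 1) (b 2) (b 3)
      (b 0) (b 1) (b 2) (b 3) (a 0) (a 1) (a 2) (a 3)
      (by omega) (by omega) (by omega) (by omega) (by omega) (by omega) (by omega) (by omega)
  · rw [Ideal.span_le]
    rintro f hf
    simp only [Set.mem_insert_iff, Set.mem_singleton_iff] at hf
    have hw1 : (![1, 1, 0, -1] : Fin 4 → ℤ) ∈
        AddSubgroup.closure {![1, 1, 0, -1], ![0, 1, 1, -1]} :=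
      AddSubgroup.subset_closure (Set.mem_insert _ _)
    have hw2 : (![0, 1, 1, -1] : Fin 4 → ℤ) ∈
        AddSubgroup.closure {![1, 1, 0, -1], ![0, 1, 1, -1]} :=
      AddSubgroup.subset_closure (Set.mem_insert_of_mem _ rfl)
    rcases hf with rfl | rfl | rfl
    · refine Ideal.subset_span ⟨![1,1,0,0], ![0,0,0,1], ?_, ?_⟩
      · have : ((fun i => ((![1,1,0,0] : Fin 4 → ℕ) i : ℤ))
            - fun i => ((![0,0,0,1] : Fin 4 → ℕ) i : ℤ)) = ![1, 1, 0, -1] := by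
          funext i; fin_cases i <;> simp
        rw [this]; exact hw1
      · simp [xymon, Fin.prod_univ_four]; try ring
    · refine Ideal.subset_span ⟨![0,1,1,0], ![0,0,0,1], ?_, ?_⟩
      · have : ((fun i => ((![0,1,1,0] : Fin 4 → ℕ) i : ℤ))
            - fun i => ((![0,0,0,1] : Fin 4 → ℕ) i : ℤ)) = ![0, 1, 1, -1] := by
          funext i; fin_cases i <;> simp
        rw [this]; exact hw2
      · simp [xymon, Fin.prod_univ_four]; try ring
    · refine Ideal.subset_span ⟨![1,0,0,0], ![0,0,1,0], ?_, ?_⟩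
      · have : ((fun i => ((![1,0,0,0] : Fin 4 → ℕ) i : ℤ))
            - fun i => ((![0,0,1,0] : Fin 4 → ℕ) i : ℤ)) = ![1, 1, 0, -1] - ![0, 1, 1, -1] := by
          funext i; fin_cases i <;> simp
        rw [this]; exact sub_mem hw1 hw2
      · simp [xymon, Fin.prod_univ_four]; try ring

end
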